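/- arXiv:2206.05732 — 2 statements merged into one kernel-verified Lean document; each statement's English description precedes it below -/
import Mathlib

section
/- Let A be a real symmetric d×d matrix, b ∈ ℝ^d, and for each k let x_k minimize ‖b − A x‖ over K_k(A,b), with residual r_k = b − A x_k. Then for all indices i ≠ k with i, k ≥ 1, the residuals satisfy ⟨r_i, A r_k⟩ = 0. -/
open Matrix

noncomputable def Krylov {d : ℕ} (A : Matrix (Fin d) (Fin d) ℝ) (b : Fin d → ℝ) (k : ℕ) :
    Submodule ℝ (Fin d → ℝ) :=
  Submodule.span ℝ {v | ∃ i < k, v = (A ^ i).mulVec b}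

noncomputable def enorm {d : ℕ} (v : Fin d → ℝ) : ℝ := Real.sqrt (v ⬝ᵥ v)

lemma dp_nonneg {d : ℕ} (v : Fin d → ℝ) : 0 ≤ v ⬝ᵥ v :=
  Finset.sum_nonneg fun i _ => mul_self_nonneg _

lemma Krylov_mono {d : ℕ} (A : Matrix (Fin d) (Fin d) ℝ) (b : Fin d → ℝ) {i k : ℕ}
    (h : i ≤ k) : Krylov A b i ≤ Krylov A b k := by
  apply Submodule.span_mono
  rintro v ⟨j, hj, rfl⟩
  exact ⟨j, lt_of_lt_of_le hj h, rfl⟩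

lemma Krylov_map {d : ℕ} (A : Matrix (Fin d) (Fin d) ℝ) (b : Fin d → ℝ) {k : ℕ}
    {v : Fin d → ℝ} (hv : v ∈ Krylov A b k) : A.mulVec v ∈ Krylov A b (k + 1) := by
  induction hv using Submodule.span_induction with
  | mem v hv =>
    obtain ⟨j, hj, rfl⟩ := hv
    apply Submodule.subset_span
    refine ⟨j + 1, by omega, ?_⟩
    rw [pow_succ', Matrix.mulVec_mulVec]
  | zero => rw [Matrix.mulVec_zero]; exact zero_mem _
  | add u w _ _ hu hw => rw [Matrix.mulVec_add]; exact add_mem hu hw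
  | smul c u _ hu => rw [Matrix.mulVec_smul]; exact Submodule.smul_mem _ c hu

lemma r_mem {d : ℕ} (A : Matrix (Fin d) (Fin d) ℝ) (b : Fin d → ℝ)
    (x : ℕ → (Fin d → ℝ)) (hmem : ∀ k, x k ∈ Krylov A b k) (k : ℕ) :
    b - A.mulVec (x k) ∈ Krylov A b (k + 1) := by
  apply sub_mem
  · exact Submodule.subset_span ⟨0, by omega, by simp [Matrix.mulVec_one]⟩
  · exact Krylov_map A b (hmem k)

lemma ortho {d : ℕ} (A : Matrix (Fin d) (Fin d) ℝ)
    (b : Fin d → ℝ) (x : ℕ → (Fin d → ℝ))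
    (hmem : ∀ k, x k ∈ Krylov A b k)
    (hmin : ∀ k, ∀ y ∈ Krylov A b k,
      _root_.enorm (b - A.mulVec (x k)) ≤ _root_.enorm (b - A.mulVec y))
    (k : ℕ) {v : Fin d → ℝ} (hv : v ∈ Krylov A b k) :
    (b - A.mulVec (x k)) ⬝ᵥ A.mulVec v = 0 := by
  set rk := b - A.mulVec (x k) with hrk
  set w := A.mulVec v with hw
  set c := rk ⬝ᵥ w with hc
  set n := w ⬝ᵥ w with hn
  have hn0 : 0 ≤ n := dp_nonneg w
  have key : ∀ t : ℝ, 0 ≤ n * t ^ 2 - 2 * c * t := by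
    intro t
    have hy : x k + t • v ∈ Krylov A b k := add_mem (hmem k) (Submodule.smul_mem _ t hv)
    have := hmin k _ hy
    have heq : b - A.mulVec (x k + t • v) = rk - t • w := by
      rw [Matrix.mulVec_add, Matrix.mulVec_smul, sub_add_eq_sub_sub]
    rw [heq, _root_.enorm, _root_.enorm] at this
    have h2 : rk ⬝ᵥ rk ≤ (rk - t • w) ⬝ᵥ (rk - t • w) := by
      have h3 : 0 ≤ (rk - t • w) ⬝ᵥ (rk - t • w) := dp_nonneg _
      nlinarith [Real.sq_sqrt (dp_nonneg rk), Real.sq_sqrt h3,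
        Real.sqrt_nonneg (rk ⬝ᵥ rk), Real.sqrt_nonneg ((rk - t • w) ⬝ᵥ (rk - t • w))]
    have hexp : (rk - t • w) ⬝ᵥ (rk - t • w) = rk ⬝ᵥ rk - 2 * c * t + n * t ^ 2 := by
      simp only [sub_dotProduct, dotProduct_sub, smul_dotProduct,
        dotProduct_smul, smul_eq_mul, hc, hn]
      rw [dotProduct_comm w rk]
      ring
    rw [hexp] at h2
    linarith
  have hkey := key (c / (n + 1))
  have hpos : (0:ℝ) < n + 1 := by linarith
  have h2 : 0 ≤ (n * (c / (n + 1)) ^ 2 - 2 * c * (c / (n + 1))) * (n + 1) ^ 2 :=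
    mul_nonneg hkey (sq_nonneg _)
  have h3 : (n * (c / (n + 1)) ^ 2 - 2 * c * (c / (n + 1))) * (n + 1) ^ 2
      = c ^ 2 * n - 2 * c ^ 2 * (n + 1) := by
    field_simp
  rw [h3] at h2
  nlinarith [sq_nonneg c]

theorem stmt1 {d : ℕ} (A : Matrix (Fin d) (Fin d) ℝ) (hA : A.IsSymm)
    (b : Fin d → ℝ) (x : ℕ → (Fin d → ℝ))
    (hmem : ∀ k, x k ∈ Krylov A b k)
    (hmin : ∀ k, ∀ y ∈ Krylov A b k,
      _root_.enorm (b - A.mulVec (x k)) ≤ _root_.enorm (b - A.mulVec y))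
    (r : ℕ → (Fin d → ℝ)) (hr : ∀ k, r k = b - A.mulVec (x k)) :
    ∀ i k, 1 ≤ i → 1 ≤ k → i ≠ k → (r i) ⬝ᵥ (A.mulVec (r k)) = 0 := by
  intro i k hi hk hik
  rcases lt_or_gt_of_ne hik with h | h
  · -- i < k : r i ∈ K_{i+1} ≤ K_k
    have hri : r i ∈ Krylov A b k := by
      rw [hr]; exact Krylov_mono A b (by omega) (r_mem A b x hmem i)
    have h0 : (b - A.mulVec (x k)) ⬝ᵥ A.mulVec (r i) = 0 :=
      ortho A b x hmem hmin k hri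
    rw [← hr k] at h0
    calc (r i) ⬝ᵥ (A.mulVec (r k)) = A.vecMul (r i) ⬝ᵥ (r k) := by
          rw [Matrix.dotProduct_mulVec]
      _ = A.mulVec (r i) ⬝ᵥ (r k) := by
          rw [← Matrix.mulVec_transpose, hA.eq]
      _ = (r k) ⬝ᵥ A.mulVec (r i) := dotProduct_comm _ _
      _ = 0 := h0
  · -- k < i : r k ∈ K_i
    have hrk : r k ∈ Krylov A b i := by
      rw [hr]; exact Krylov_mono A b (by omega) (r_mem A b x hmem k)
    have h0 := ortho A b x hmem hmin i hrk
    rw [← hr i] at h0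
    exact h0
end

section
/- Let A be a real symmetric positive semidefinite matrix and b ∈ ℝ^d with b ∈ range(A), and let g be the grade of b with respect to A. Then T_g = V_gᵀ A V_g is positive definite, where V_g is a matrix with orthonormal columns spanning K_g(A,b). -/
open Matrix

theorem stmt7 {d g : ℕ} (A : Matrix (Fin d) (Fin d) ℝ) (hA : A.PosSemidef)
    (b : Fin d → ℝ) (hb : ∃ x : Fin d → ℝ, A.mulVec x = b)
    -- `g` is the grade of `b` with respect to `A`
    (hgrade : ∀ j, Module.finrank ℝ (Krylov A b j) = min j g)
    (V : Matrix (Fin d) (Fin g) ℝ) (hVo : Vᵀ * V = 1)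
    (hVspan : Submodule.span ℝ (Set.range fun j => Vᵀ j) = Krylov A b g) :
    (Vᵀ * A * V).PosDef := by
  obtain ⟨x₀, hx₀⟩ := hb
  -- The Krylov space is contained in the range of A
  have hKrange : Krylov A b g ≤ LinearMap.range A.mulVecLin := by
    apply Submodule.span_le.mpr
    rintro v ⟨i, hi, rfl⟩
    refine ⟨(A ^ i).mulVec x₀, ?_⟩
    simp only [mulVecLin_apply, mulVec_mulVec]
    rw [show A * A ^ i = A ^ i * A from ((Commute.refl A).pow_right i).eq,
      ← mulVec_mulVec, hx₀]
  rw [posDef_iff_dotProduct_mulVec]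
  constructor
  · -- Hermitian
    have h := isHermitian_conjTranspose_mul_mul V hA.isHermitian
    have hVc : Vᴴ = Vᵀ := by ext i j; simp [conjTranspose_apply]
    rwa [hVc] at h
  · intro x hx
    set v := V.mulVec x with hv
    have hdot : x ⬝ᵥ (Vᵀ * A * V).mulVec x = v ⬝ᵥ A.mulVec v := by
      rw [← mulVec_mulVec, ← mulVec_mulVec, dotProduct_mulVec x Vᵀ, vecMul_transpose]
    have hnn : 0 ≤ v ⬝ᵥ A.mulVec v := by simpa using hA.dotProduct_mulVec_nonneg v
    rcases lt_or_eq_of_le hnn with hlt | heq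
    · simp only [star_trivial]
      rw [hdot]; exact hlt
    · exfalso
      -- v ⬝ᵥ A v = 0 ⟹ A v = 0
      have hAv : A.mulVec v = 0 := by
        have := (hA.dotProduct_mulVec_zero_iff v).mp
        simp only [star_trivial] at this
        exact this heq.symm
      -- v ∈ Krylov space ⊆ range A
      have hvmem : v ∈ Krylov A b g := by
        rw [← hVspan]
        have : v = ∑ j, x j • Vᵀ j := by
          funext i
          simp [hv, mulVec, dotProduct, Finset.sum_apply, mul_comm, Matrix.transpose_apply]
        rw [this]
        exact Submodule.sum_mem _ fun j _ =>
          Submodule.smul_mem _ _ (Submodule.subset_span ⟨j, rfl⟩)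
      obtain ⟨u, hu⟩ := hKrange hvmem
      -- v = A u and A v = 0 ⟹ v ⬝ᵥ v = 0
      have hu' : A *ᵥ u = v := by simpa using hu
      have hAs : Aᵀ = A := hA.isHermitian
      have hvA : v ᵥ* A = 0 := by
        rw [← hAs, vecMul_transpose, hAv]
      have hvz : v = 0 := by
        have hvv : v ⬝ᵥ v = 0 := by
          calc v ⬝ᵥ v = v ⬝ᵥ (A *ᵥ u) := by rw [hu']
            _ = (v ᵥ* A) ⬝ᵥ u := dotProduct_mulVec v A u
            _ = 0 := by rw [hvA, zero_dotProduct]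
        exact dotProduct_self_eq_zero.mp hvv
      -- v = 0 ⟹ x = 0, contradiction
      apply hx
      have : Vᵀ.mulVec v = x := by
        rw [hv, mulVec_mulVec, hVo, one_mulVec]
      rw [← this, hvz, mulVec_zero]
end
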